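/- Let X₁,…,Xₘ be a sample of size m drawn uniformly without replacement from a finite multiset of n reals all lying in [a,b]. Then for all λ > 0, P(|Σᵢ Xᵢ − E[Σᵢ Xᵢ]| ≥ λ) ≤ 2·exp(−2λ²/(m(b−a)²)). -/

import Mathlib

open scoped Classical

open Finset

section HoeffdingAux



lemma hoefA {p : ℝ} (hp0 : 0 ≤ p) (hp1 : p ≤ 1) {h : ℝ} (hh : 0 ≤ h) :
    1 - p + p * Real.exp h ≤ Real.exp (p * h + h ^ 2 / 8) := by
  have hA : ∀ y : ℝ, 0 < 1 - p + p * Real.exp y := by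
    intro y
    rcases eq_or_lt_of_le hp0 with hp | hp
    · simp [← hp]
    · have := Real.exp_pos y; nlinarith
  set φ : ℝ → ℝ := fun y => p * y + y ^ 2 / 8 - Real.log (1 - p + p * Real.exp y) with hφ
  set φ' : ℝ → ℝ := fun y => p + y / 4 - p * Real.exp y / (1 - p + p * Real.exp y) with hφ'
  have hder : ∀ y, HasDerivAt φ (φ' y) y := by
    intro y
    have h1 : HasDerivAt (fun y : ℝ => 1 - p + p * Real.exp y) (p * Real.exp y) y := by
      simpa using ((Real.hasDerivAt_exp y).const_mul p).const_add (1 - p)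
    have h2 := h1.log (hA y).ne'
    have h3 : HasDerivAt (fun y : ℝ => p * y + y ^ 2 / 8) (p + y / 4) y := by
      have : HasDerivAt (fun y : ℝ => p * y + y ^ 2 / 8) (p * 1 + ((2:ℕ):ℝ) * y ^ (2 - 1) / 8) y :=
        ((hasDerivAt_id y).const_mul p).add ((hasDerivAt_pow 2 y).div_const 8)
      convert this using 1
      simp; ring
    exact h3.sub h2
  have hder2 : ∀ y, HasDerivAt φ'
      (1 / 4 - (p * Real.exp y * (1 - p + p * Real.exp y) -
        p * Real.exp y * (p * Real.exp y)) / (1 - p + p * Real.exp y) ^ 2) y := by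
    intro y
    have h1 : HasDerivAt (fun y : ℝ => 1 - p + p * Real.exp y) (p * Real.exp y) y := by
      simpa using ((Real.hasDerivAt_exp y).const_mul p).const_add (1 - p)
    have h2 : HasDerivAt (fun y : ℝ => p * Real.exp y) (p * Real.exp y) y :=
      (Real.hasDerivAt_exp y).const_mul p
    have h4 := h2.div h1 (hA y).ne'
    have h3 : HasDerivAt (fun y : ℝ => p + y / 4) (1 / 4) y := by
      simpa using ((hasDerivAt_id y).div_const 4).const_add p
    exact h3.sub h4
  have hD : ∀ y, 0 ≤ 1 / 4 - (p * Real.exp y * (1 - p + p * Real.exp y) -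
      p * Real.exp y * (p * Real.exp y)) / (1 - p + p * Real.exp y) ^ 2 := by
    intro y
    rw [sub_nonneg, div_le_iff₀ (by have := hA y; positivity)]
    nlinarith [sq_nonneg (1 - p - p * Real.exp y), (hA y).le, (Real.exp_pos y).le]
  have hmono' : Monotone φ' :=
    monotone_of_deriv_nonneg (fun y => (hder2 y).differentiableAt)
      (fun y => by rw [(hder2 y).deriv]; exact hD y)
  have hφ'0 : φ' 0 = 0 := by simp [φ']
  have hmono : MonotoneOn φ (Set.Ici 0) := by
    apply monotoneOn_of_deriv_nonneg (convex_Ici 0)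
      (Differentiable.continuous (fun y => (hder y).differentiableAt)).continuousOn
      (fun y _ => (hder y).differentiableAt.differentiableWithinAt)
    intro y hy
    rw [(hder y).deriv, ← hφ'0]
    exact hmono' (le_of_lt (by simpa using hy))
  have h0 : φ 0 = 0 := by simp [φ]
  have := hmono (Set.self_mem_Ici) (by exact hh) hh
  rw [h0] at this
  have hlog : Real.log (1 - p + p * Real.exp h) ≤ p * h + h ^ 2 / 8 := by
    simp only [φ] at this; linarith
  exact (Real.log_le_iff_le_exp (hA h)).1 hlog

lemma hoefB (p h : ℝ) (hp0 : 0 ≤ p) (hp1 : p ≤ 1) :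
    1 - p + p * Real.exp h ≤ Real.exp (p * h + h ^ 2 / 8) := by
  rcases le_or_gt 0 h with hh | hh
  · exact hoefA hp0 hp1 hh
  · have key := hoefA (p := 1 - p) (h := -h) (by linarith) (by linarith) (by linarith)
    have e1 : (0:ℝ) < Real.exp h := Real.exp_pos h
    have : (1 - (1 - p) + (1 - p) * Real.exp (-h)) * Real.exp h ≤
        Real.exp ((1 - p) * (-h) + (-h) ^ 2 / 8) * Real.exp h :=
      mul_le_mul_of_nonneg_right key e1.le
    calc 1 - p + p * Real.exp h
        = (1 - (1 - p) + (1 - p) * Real.exp (-h)) * Real.exp h := by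
          rw [Real.exp_neg]; field_simp; ring
      _ ≤ Real.exp ((1 - p) * (-h) + (-h) ^ 2 / 8) * Real.exp h := this
      _ = Real.exp (p * h + h ^ 2 / 8) := by rw [← Real.exp_add]; ring_nf


lemma hoefAvg (n : ℕ) (hn : 0 < n) (a b t : ℝ) (hab : a < b) (x : Fin n → ℝ)
    (hx : ∀ i, a ≤ x i ∧ x i ≤ b) :
    ∑ j, Real.exp (t * x j) ≤
      n * Real.exp (t * ((∑ j, x j) / n) + t ^ 2 * (b - a) ^ 2 / 8) := by
  have hba : (0:ℝ) < b - a := by linarith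
  have hn' : (0:ℝ) < n := by exact_mod_cast hn
  set S := ∑ j, x j with hS
  set μ := S / n with hμ
  have hμa : a ≤ μ := by
    rw [hμ, le_div_iff₀ hn']
    calc a * n = ∑ _j : Fin n, a := by simp [mul_comm]
      _ ≤ S := Finset.sum_le_sum fun j _ => (hx j).1
  have hμb : μ ≤ b := by
    rw [hμ, div_le_iff₀ hn']
    calc S ≤ ∑ _j : Fin n, b := Finset.sum_le_sum fun j _ => (hx j).2
      _ = b * n := by simp [mul_comm]
  set p := (μ - a) / (b - a) with hp
  have hp0 : 0 ≤ p := div_nonneg (by linarith) hba.le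
  have hp1 : p ≤ 1 := (div_le_one hba).2 (by linarith)
  -- pointwise convexity bound
  have hpt : ∀ j, Real.exp (t * x j) ≤
      (b - x j) / (b - a) * Real.exp (t * a) + (x j - a) / (b - a) * Real.exp (t * b) := by
    intro j
    have h1 : 0 ≤ (b - x j) / (b - a) := div_nonneg (by linarith [(hx j).2]) hba.le
    have h2 : 0 ≤ (x j - a) / (b - a) := div_nonneg (by linarith [(hx j).1]) hba.le
    have h3 : (b - x j) / (b - a) + (x j - a) / (b - a) = 1 := by field_simp; ring
    have := convexOn_exp.2 (Set.mem_univ (t * a)) (Set.mem_univ (t * b)) h1 h2 h3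
    simp only [smul_eq_mul] at this
    have harg : (b - x j) / (b - a) * (t * a) + (x j - a) / (b - a) * (t * b) = t * x j := by
      field_simp; ring
    rwa [harg] at this
  have hsum : ∑ j, Real.exp (t * x j) ≤
      n * ((1 - p) * Real.exp (t * a) + p * Real.exp (t * b)) := by
    calc ∑ j, Real.exp (t * x j)
        ≤ ∑ j, ((b - x j) / (b - a) * Real.exp (t * a) + (x j - a) / (b - a) * Real.exp (t * b)) :=
          Finset.sum_le_sum fun j _ => hpt j
      _ = ((n * b - S) / (b - a)) * Real.exp (t * a) + ((S - n * a) / (b - a)) * Real.exp (t * b) := by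
          rw [Finset.sum_add_distrib, ← Finset.sum_mul, ← Finset.sum_mul]
          congr 2
          · rw [← Finset.sum_div]
            congr 1
            rw [Finset.sum_sub_distrib]
            simp [hS, mul_comm]
          · rw [← Finset.sum_div]
            congr 1
            rw [Finset.sum_sub_distrib]
            simp [hS, mul_comm]
      _ = n * ((1 - p) * Real.exp (t * a) + p * Real.exp (t * b)) := by
          have e1 : (n * b - S) / (b - a) = n * (1 - p) := by
            rw [hp, hμ]; field_simp; try ring
          have e2 : (S - n * a) / (b - a) = n * p := by
            rw [hp, hμ]; field_simp; try ring
          rw [e1, e2]; ring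
  have hkey : (1 - p) * Real.exp (t * a) + p * Real.exp (t * b) ≤
      Real.exp (t * μ + t ^ 2 * (b - a) ^ 2 / 8) := by
    have := hoefB p (t * b - t * a) hp0 hp1
    have hmul := mul_le_mul_of_nonneg_right this (Real.exp_pos (t * a)).le
    calc (1 - p) * Real.exp (t * a) + p * Real.exp (t * b)
        = (1 - p + p * Real.exp (t * b - t * a)) * Real.exp (t * a) := by
          rw [Real.exp_sub]; field_simp; try ring
      _ ≤ Real.exp (p * (t * b - t * a) + (t * b - t * a) ^ 2 / 8) * Real.exp (t * a) := hmul
      _ = Real.exp (t * μ + t ^ 2 * (b - a) ^ 2 / 8) := by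
          rw [← Real.exp_add]
          congr 1
          have hμeq : p * (b - a) = μ - a := by rw [hp]; field_simp
          linear_combination t * hμeq
  calc ∑ j, Real.exp (t * x j) ≤ n * ((1 - p) * Real.exp (t * a) + p * Real.exp (t * b)) := hsum
    _ ≤ n * Real.exp (t * μ + t ^ 2 * (b - a) ^ 2 / 8) := by
        exact mul_le_mul_of_nonneg_left hkey hn'.le


noncomputable def EkFun' (n : ℕ) (w : Fin n → ℝ) (k : ℕ) : ℝ :=
  ∑ σ : Equiv.Perm (Fin n), ∏ i ∈ Finset.univ.filter (fun i : Fin n => (i : ℕ) < k), w (σ i)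

lemma Ek_zero' (n : ℕ) (w : Fin n → ℝ) : EkFun' n w 0 = (n.factorial : ℝ) := by
  simp [EkFun', Fintype.card_perm]

lemma Ek_nonneg' (n : ℕ) (w : Fin n → ℝ) (hw : ∀ j, 0 ≤ w j) (k : ℕ) : 0 ≤ EkFun' n w k :=
  Finset.sum_nonneg fun σ _ => Finset.prod_nonneg fun i _ => hw _

/-- reindexing a permutation sum by right multiplication -/
lemma perm_sum_reindex {n : ℕ} (τ : Equiv.Perm (Fin n)) (g : Equiv.Perm (Fin n) → ℝ) :
    ∑ σ : Equiv.Perm (Fin n), g (σ * τ) = ∑ σ : Equiv.Perm (Fin n), g σ :=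
  Equiv.sum_comp (Equiv.mulRight τ) g

/-- swapping two positions not in S in a "tagged" permutation sum -/
lemma T_eq' {n : ℕ} (w : Fin n → ℝ) (S : Finset (Fin n)) (i j : Fin n)
    (hi : i ∉ S) (hj : j ∉ S) :
    ∑ σ : Equiv.Perm (Fin n), w (σ i) * ∏ i' ∈ S, w (σ i') =
    ∑ σ : Equiv.Perm (Fin n), w (σ j) * ∏ i' ∈ S, w (σ i') := by
  rw [← perm_sum_reindex (Equiv.swap i j) (fun σ => w (σ j) * ∏ i' ∈ S, w (σ i'))]
  apply Finset.sum_congr rfl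
  intro σ _
  simp only [Equiv.Perm.mul_apply, Equiv.swap_apply_right]
  congr 1
  apply Finset.prod_congr rfl
  intro i' hi'
  rw [Equiv.swap_apply_of_ne_of_ne (ne_of_mem_of_not_mem hi' hi) (ne_of_mem_of_not_mem hi' hj)]

/-- the squared-weight bound via symmetrization (Cauchy–Schwarz step) -/
lemma F_ge' {n : ℕ} (w : Fin n → ℝ) (hw : ∀ j, 0 ≤ w j) (S : Finset (Fin n)) (i j : Fin n)
    (hi : i ∉ S) (hj : j ∉ S) (hij : i ≠ j) :
    ∑ σ : Equiv.Perm (Fin n), w (σ j) * (w (σ i) * ∏ i' ∈ S, w (σ i')) ≤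
    ∑ σ : Equiv.Perm (Fin n), w (σ i) * (w (σ i) * ∏ i' ∈ S, w (σ i')) := by
  have hsym : ∀ f : ℝ → ℝ → ℝ,
      ∑ σ : Equiv.Perm (Fin n), f (w (σ i)) (w (σ j)) * ∏ i' ∈ S, w (σ i') =
      ∑ σ : Equiv.Perm (Fin n), f (w (σ j)) (w (σ i)) * ∏ i' ∈ S, w (σ i') := by
    intro f
    rw [← perm_sum_reindex (Equiv.swap i j)
      (fun σ => f (w (σ j)) (w (σ i)) * ∏ i' ∈ S, w (σ i'))]
    apply Finset.sum_congr rfl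
    intro σ _
    simp only [Equiv.Perm.mul_apply, Equiv.swap_apply_right, Equiv.swap_apply_left]
    congr 1
    apply Finset.prod_congr rfl
    intro i' hi'
    rw [Equiv.swap_apply_of_ne_of_ne (ne_of_mem_of_not_mem hi' hi) (ne_of_mem_of_not_mem hi' hj)]
  have key : ∑ σ : Equiv.Perm (Fin n),
      (w (σ i) - w (σ j)) ^ 2 * ∏ i' ∈ S, w (σ i') ≥ 0 :=
    Finset.sum_nonneg fun σ _ =>
      mul_nonneg (sq_nonneg _) (Finset.prod_nonneg fun i' _ => hw _)
  have h2 := hsym (fun u v => (u - v) * u)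
  have expand : ∑ σ : Equiv.Perm (Fin n), (w (σ i) - w (σ j)) ^ 2 * ∏ i' ∈ S, w (σ i') =
      ∑ σ : Equiv.Perm (Fin n), (w (σ i) - w (σ j)) * w (σ i) * ∏ i' ∈ S, w (σ i') +
      ∑ σ : Equiv.Perm (Fin n), (w (σ j) - w (σ i)) * w (σ j) * ∏ i' ∈ S, w (σ i') := by
    rw [← Finset.sum_add_distrib]
    apply Finset.sum_congr rfl
    intro σ _
    ring
  have hdiff : ∑ σ : Equiv.Perm (Fin n), w (σ i) * (w (σ i) * ∏ i' ∈ S, w (σ i')) -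
      ∑ σ : Equiv.Perm (Fin n), w (σ j) * (w (σ i) * ∏ i' ∈ S, w (σ i')) =
      ∑ σ : Equiv.Perm (Fin n), (w (σ i) - w (σ j)) * w (σ i) * ∏ i' ∈ S, w (σ i') := by
    rw [← Finset.sum_sub_distrib]
    apply Finset.sum_congr rfl
    intro σ _
    ring
  -- 2 * diff = sum of squares ≥ 0
  have : 2 * (∑ σ : Equiv.Perm (Fin n), w (σ i) * (w (σ i) * ∏ i' ∈ S, w (σ i')) -
      ∑ σ : Equiv.Perm (Fin n), w (σ j) * (w (σ i) * ∏ i' ∈ S, w (σ i'))) =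
      ∑ σ : Equiv.Perm (Fin n), (w (σ i) - w (σ j)) ^ 2 * ∏ i' ∈ S, w (σ i') := by
    rw [hdiff, expand]
    rw [h2]
    ring
  linarith [key, this]




lemma card_filter_lt' (n k : ℕ) (h : k ≤ n) :
    (Finset.univ.filter (fun i : Fin n => (i : ℕ) < k)).card = k := by
  have : (Finset.univ.filter (fun i : Fin n => (i : ℕ) < k)) =
      (Finset.range k).attachFin (fun m hm => lt_of_lt_of_le (Finset.mem_range.1 hm) h) := by
    ext i
    simp [Finset.mem_attachFin]
  rw [this, Finset.card_attachFin, Finset.card_range]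

lemma Ek_step' (n k : ℕ) (hk : k < n) (w : Fin n → ℝ) (hw : ∀ j, 0 ≤ w j) :
    (n : ℝ) * EkFun' n w (k + 1) ≤ (∑ j, w j) * EkFun' n w k := by
  set P := Finset.univ.filter (fun i : Fin n => (i : ℕ) < k) with hP
  set jk : Fin n := ⟨k, hk⟩ with hjk
  have hjkP : jk ∉ P := by simp [hP, hjk]
  have hPk1 : Finset.univ.filter (fun i : Fin n => (i : ℕ) < k + 1) = insert jk P := by
    ext i
    simp only [hP, Finset.mem_filter, Finset.mem_univ, true_and, Finset.mem_insert]
    constructor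
    · intro hi
      rcases Nat.lt_succ_iff_lt_or_eq.1 hi with h' | h'
      · exact Or.inr (by simpa using h')
      · exact Or.inl (Fin.ext h')
    · rintro (rfl | h')
      · exact Nat.lt_succ_self _
      · exact Nat.lt_succ_of_lt h'
  have hEk1 : EkFun' n w (k + 1) =
      ∑ σ : Equiv.Perm (Fin n), w (σ jk) * ∏ i ∈ P, w (σ i) := by
    unfold EkFun'
    rw [hPk1]
    exact Finset.sum_congr rfl fun σ _ => Finset.prod_insert hjkP
  -- expand RHS
  have hRHS : (∑ j, w j) * EkFun' n w k =
      ∑ i : Fin n, ∑ σ : Equiv.Perm (Fin n), w (σ i) * ∏ i' ∈ P, w (σ i') := by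
    unfold EkFun'
    rw [Finset.mul_sum]
    rw [Finset.sum_comm]
    apply Finset.sum_congr rfl
    intro σ _
    rw [← Finset.sum_mul]
    congr 1
    exact (Equiv.sum_comp σ w).symm
  -- split over i ∈ P or not
  have hsplit : ∑ i : Fin n, ∑ σ : Equiv.Perm (Fin n), w (σ i) * ∏ i' ∈ P, w (σ i') =
      (∑ i ∈ P, ∑ σ : Equiv.Perm (Fin n), w (σ i) * ∏ i' ∈ P, w (σ i')) +
      ∑ i ∈ Finset.univ.filter (fun i : Fin n => ¬ (i : ℕ) < k),
        ∑ σ : Equiv.Perm (Fin n), w (σ i) * ∏ i' ∈ P, w (σ i') := by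
    rw [hP]
    exact (Finset.sum_filter_add_sum_filter_not _ _ _).symm
  -- i not in P: value equals EkFun' (k+1)
  have hout : ∀ i ∈ Finset.univ.filter (fun i : Fin n => ¬ (i : ℕ) < k),
      ∑ σ : Equiv.Perm (Fin n), w (σ i) * ∏ i' ∈ P, w (σ i') = EkFun' n w (k + 1) := by
    intro i hi
    rw [hEk1]
    apply T_eq' w P i jk
    · simpa [hP] using (Finset.mem_filter.1 hi).2
    · exact hjkP
  -- i in P: value is at least EkFun' (k+1)
  have hin : ∀ i ∈ P, EkFun' n w (k + 1) ≤
      ∑ σ : Equiv.Perm (Fin n), w (σ i) * ∏ i' ∈ P, w (σ i') := by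
    intro i hi
    have hiP : i ∈ P := hi
    have hierase : i ∉ P.erase i := Finset.notMem_erase i P
    have hjkerase : jk ∉ P.erase i := fun h => hjkP (Finset.mem_of_mem_erase h)
    have hijk : i ≠ jk := ne_of_mem_of_not_mem hiP hjkP
    have hPi : P = insert i (P.erase i) := (Finset.insert_erase hiP).symm
    have e1 : ∀ σ : Equiv.Perm (Fin n), ∏ i' ∈ P, w (σ i') =
        w (σ i) * ∏ i' ∈ P.erase i, w (σ i') := by
      intro σ
      conv_lhs => rw [hPi]
      exact Finset.prod_insert hierase
    rw [hEk1]
    calc ∑ σ : Equiv.Perm (Fin n), w (σ jk) * ∏ i' ∈ P, w (σ i')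
        = ∑ σ : Equiv.Perm (Fin n), w (σ jk) * (w (σ i) * ∏ i' ∈ P.erase i, w (σ i')) := by
          exact Finset.sum_congr rfl fun σ _ => by rw [e1 σ]
      _ ≤ ∑ σ : Equiv.Perm (Fin n), w (σ i) * (w (σ i) * ∏ i' ∈ P.erase i, w (σ i')) :=
          F_ge' w hw (P.erase i) i jk hierase hjkerase hijk
      _ = ∑ σ : Equiv.Perm (Fin n), w (σ i) * ∏ i' ∈ P, w (σ i') := by
          exact Finset.sum_congr rfl fun σ _ => by rw [e1 σ]
  -- put it together
  have hcardP : P.card = k := card_filter_lt' n k hk.le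
  have hcardQ : (Finset.univ.filter (fun i : Fin n => ¬ (i : ℕ) < k)).card = n - k := by
    have := Finset.card_filter_add_card_filter_not
      (s := (Finset.univ : Finset (Fin n))) (p := fun i : Fin n => (i : ℕ) < k)
    rw [← hP, hcardP, Finset.card_univ, Fintype.card_fin] at this
    omega
  have h1 : ∑ i ∈ Finset.univ.filter (fun i : Fin n => ¬ (i : ℕ) < k),
      ∑ σ : Equiv.Perm (Fin n), w (σ i) * ∏ i' ∈ P, w (σ i') =
      ((n - k : ℕ) : ℝ) * EkFun' n w (k + 1) := by
    rw [Finset.sum_congr rfl hout, Finset.sum_const, hcardQ, nsmul_eq_mul]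
  have h2 : (k : ℝ) * EkFun' n w (k + 1) ≤
      ∑ i ∈ P, ∑ σ : Equiv.Perm (Fin n), w (σ i) * ∏ i' ∈ P, w (σ i') := by
    have := Finset.card_nsmul_le_sum P _ _ hin
    rwa [hcardP, nsmul_eq_mul] at this
  have hcast : ((n - k : ℕ) : ℝ) = (n : ℝ) - k := by
    rw [Nat.cast_sub hk.le]
  rw [hRHS, hsplit]
  have : (n : ℝ) * EkFun' n w (k + 1) =
      (k : ℝ) * EkFun' n w (k + 1) + ((n - k : ℕ) : ℝ) * EkFun' n w (k + 1) := by
    rw [hcast]; ring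
  rw [this, ← h1]
  exact add_le_add_left h2 _



lemma Ek_le' (n : ℕ) (hn : 0 < n) (w : Fin n → ℝ) (hw : ∀ j, 0 ≤ w j) :
    ∀ m : ℕ, m ≤ n → EkFun' n w m ≤ (n.factorial : ℝ) * ((∑ j, w j) / n) ^ m := by
  intro m
  induction m with
  | zero => intro _; simp [Ek_zero']
  | succ k ih =>
    intro hk1
    have hk : k < n := hk1
    have hn' : (0:ℝ) < n := by exact_mod_cast hn
    have havg : 0 ≤ (∑ j, w j) / n := div_nonneg (Finset.sum_nonneg fun j _ => hw j) hn'.le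
    have step := Ek_step' n k hk w hw
    have h1 : EkFun' n w (k + 1) ≤ ((∑ j, w j) / n) * EkFun' n w k := by
      rw [div_mul_eq_mul_div, le_div_iff₀ hn']
      linarith [step]
    calc EkFun' n w (k + 1) ≤ ((∑ j, w j) / n) * EkFun' n w k := h1
      _ ≤ ((∑ j, w j) / n) * ((n.factorial : ℝ) * ((∑ j, w j) / n) ^ k) :=
          mul_le_mul_of_nonneg_left (ih hk.le) havg
      _ = (n.factorial : ℝ) * ((∑ j, w j) / n) ^ (k + 1) := by ring



lemma oneSided (n m : ℕ) (hm : m ≤ n) (hn : 0 < n) (a b lam : ℝ) (hlam : 0 < lam)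
    (hab : a < b) (hm1 : 0 < m) (x : Fin n → ℝ) (hx : ∀ i, a ≤ x i ∧ x i ≤ b) :
    ((Finset.univ.filter (fun σ : Equiv.Perm (Fin n) =>
        lam ≤ (∑ i : Fin m, x (σ (Fin.castLE hm i))) - (m : ℝ) * (∑ i, x i) / n)).card : ℝ)
      ≤ (n.factorial : ℝ) * Real.exp (-2 * lam ^ 2 / (m * (b - a) ^ 2)) := by
  have hba : (0:ℝ) < b - a := by linarith
  have hm' : (0:ℝ) < m := by exact_mod_cast hm1
  have hn' : (0:ℝ) < n := by exact_mod_cast hn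
  set t : ℝ := 4 * lam / (m * (b - a) ^ 2) with ht
  have ht0 : 0 < t := div_pos (by positivity) (by positivity)
  set w : Fin n → ℝ := fun j => Real.exp (t * x j) with hw
  have hwpos : ∀ j, 0 ≤ w j := fun j => (Real.exp_pos _).le
  set μ : ℝ := (m : ℝ) * (∑ i, x i) / n with hμ
  set Sf : Equiv.Perm (Fin n) → ℝ := fun σ => ∑ i : Fin m, x (σ (Fin.castLE hm i)) with hSf
  set c := (Finset.univ.filter (fun σ : Equiv.Perm (Fin n) => lam ≤ Sf σ - μ)).card with hc
  -- Step 1: Chernoff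
  have step1 : (c : ℝ) * Real.exp (t * lam) ≤
      ∑ σ : Equiv.Perm (Fin n), Real.exp (t * (Sf σ - μ)) := by
    calc (c : ℝ) * Real.exp (t * lam)
        = ∑ _σ ∈ Finset.univ.filter (fun σ : Equiv.Perm (Fin n) => lam ≤ Sf σ - μ),
            Real.exp (t * lam) := by rw [Finset.sum_const, nsmul_eq_mul, hc]
      _ ≤ ∑ σ ∈ Finset.univ.filter (fun σ : Equiv.Perm (Fin n) => lam ≤ Sf σ - μ),
            Real.exp (t * (Sf σ - μ)) := by
          apply Finset.sum_le_sum
          intro σ hσ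
          have := (Finset.mem_filter.1 hσ).2
          exact Real.exp_le_exp.2 (mul_le_mul_of_nonneg_left this ht0.le)
      _ ≤ ∑ σ : Equiv.Perm (Fin n), Real.exp (t * (Sf σ - μ)) :=
          Finset.sum_le_sum_of_subset_of_nonneg (Finset.filter_subset _ _)
            (fun σ _ _ => (Real.exp_pos _).le)
  -- Step 2: rewrite as EkFun'
  have prodeq : ∀ σ : Equiv.Perm (Fin n), Real.exp (t * Sf σ) =
      ∏ i ∈ Finset.univ.filter (fun i : Fin n => (i : ℕ) < m), w (σ i) := by
    intro σ
    rw [hSf]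
    rw [Finset.mul_sum, Real.exp_sum]
    apply Finset.prod_bij (fun (i : Fin m) _ => Fin.castLE hm i)
    · intro i _
      simp
    · intro i _ j _ hij
      exact Fin.castLE_injective hm hij
    · intro j hj
      have hjm : (j : ℕ) < m := (Finset.mem_filter.1 hj).2
      exact ⟨⟨j, hjm⟩, Finset.mem_univ _, by simp [Fin.castLE]⟩
    · intro i _
      rfl
  have step2 : ∑ σ : Equiv.Perm (Fin n), Real.exp (t * (Sf σ - μ)) =
      Real.exp (-(t * μ)) * EkFun' n w m := by
    unfold EkFun'
    rw [Finset.mul_sum]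
    apply Finset.sum_congr rfl
    intro σ _
    rw [← prodeq σ, ← Real.exp_add]
    congr 1
    ring
  -- Step 3: the MGF bound
  have step3 : EkFun' n w m ≤
      (n.factorial : ℝ) * Real.exp ((m : ℝ) * (t * ((∑ j, x j) / n) + t ^ 2 * (b - a) ^ 2 / 8)) := by
    have h1 := Ek_le' n hn w hwpos m hm
    have h2 : (∑ j, w j) / n ≤ Real.exp (t * ((∑ j, x j) / n) + t ^ 2 * (b - a) ^ 2 / 8) := by
      rw [div_le_iff₀ hn']
      calc (∑ j, w j) ≤ n * Real.exp (t * ((∑ j, x j) / n) + t ^ 2 * (b - a) ^ 2 / 8) :=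
            hoefAvg n hn a b t hab x hx
        _ = Real.exp (t * ((∑ j, x j) / n) + t ^ 2 * (b - a) ^ 2 / 8) * n := by ring
    have h3 : ((∑ j, w j) / n) ^ m ≤
        Real.exp (t * ((∑ j, x j) / n) + t ^ 2 * (b - a) ^ 2 / 8) ^ m := by
      apply pow_le_pow_left₀ (div_nonneg (Finset.sum_nonneg fun j _ => hwpos j) hn'.le) h2
    calc EkFun' n w m ≤ (n.factorial : ℝ) * ((∑ j, w j) / n) ^ m := h1
      _ ≤ (n.factorial : ℝ) * Real.exp (t * ((∑ j, x j) / n) + t ^ 2 * (b - a) ^ 2 / 8) ^ m := by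
          apply mul_le_mul_of_nonneg_left h3 (by positivity)
      _ = (n.factorial : ℝ) *
            Real.exp ((m : ℝ) * (t * ((∑ j, x j) / n) + t ^ 2 * (b - a) ^ 2 / 8)) := by
          rw [← Real.exp_nat_mul]
  -- Combine
  have hμeq : (m : ℝ) * (t * ((∑ j, x j) / n)) = t * μ := by
    rw [hμ]; ring
  have hfinal : (c : ℝ) * Real.exp (t * lam) ≤
      (n.factorial : ℝ) * Real.exp (t * lam) * Real.exp (-2 * lam ^ 2 / (m * (b - a) ^ 2)) := by
    calc (c : ℝ) * Real.exp (t * lam)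
        ≤ Real.exp (-(t * μ)) * EkFun' n w m := by rw [← step2]; exact step1
      _ ≤ Real.exp (-(t * μ)) * ((n.factorial : ℝ) *
            Real.exp ((m : ℝ) * (t * ((∑ j, x j) / n) + t ^ 2 * (b - a) ^ 2 / 8))) :=
          mul_le_mul_of_nonneg_left step3 (Real.exp_pos _).le
      _ = (n.factorial : ℝ) * Real.exp (-(t * μ) +
            (m : ℝ) * (t * ((∑ j, x j) / n) + t ^ 2 * (b - a) ^ 2 / 8)) := by
          rw [mul_left_comm, ← Real.exp_add]
      _ = (n.factorial : ℝ) * Real.exp (t * lam) * Real.exp (-2 * lam ^ 2 / (m * (b - a) ^ 2)) := by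
          rw [mul_assoc, ← Real.exp_add]
          congr 2
          have expand : -(t * μ) + (m : ℝ) * (t * ((∑ j, x j) / n) + t ^ 2 * (b - a) ^ 2 / 8) =
              (m : ℝ) * t ^ 2 * (b - a) ^ 2 / 8 := by
            rw [mul_add, hμeq]; ring
          rw [expand, ht]
          field_simp
          ring
  have hexp : (0:ℝ) < Real.exp (t * lam) := Real.exp_pos _
  have := le_of_mul_le_mul_right (by
    calc (c:ℝ) * Real.exp (t * lam) ≤ _ := hfinal
      _ = (n.factorial : ℝ) * Real.exp (-2 * lam ^ 2 / (m * (b - a) ^ 2)) * Real.exp (t * lam) := by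
          ring) hexp
  exact this




end HoeffdingAux

/-- Hoeffding's inequality for sampling without replacement: the sample of size `m` is
obtained by applying a uniformly random permutation `σ` to the population `x : Fin n → ℝ`
(all values in `[a,b]`) and taking the first `m` entries. The probability (over the uniform
choice of `σ`) that the sample sum deviates from its mean `m·(∑ x)/n` by at least `lam` is
at most `2·exp(−2·lam²/(m(b−a)²))`. -/
theorem stmt11 (n m : ℕ) (hm : m ≤ n) (hn : 0 < n)
    (a b lam : ℝ) (hlam : 0 < lam)
    (x : Fin n → ℝ) (hx : ∀ i, a ≤ x i ∧ x i ≤ b) :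
    ((Finset.univ.filter (fun σ : Equiv.Perm (Fin n) =>
        lam ≤ |(∑ i : Fin m, x (σ (Fin.castLE hm i))) - (m : ℝ) * (∑ i, x i) / n|)).card : ℝ)
      / (Fintype.card (Equiv.Perm (Fin n)) : ℝ) ≤
    2 * Real.exp (-2 * lam ^ 2 / (m * (b - a) ^ 2)) := by
  have hn' : (0:ℝ) < n := by exact_mod_cast hn
  have hN : (0:ℝ) < (Fintype.card (Equiv.Perm (Fin n)) : ℝ) := by
    have := Fintype.card_pos (α := Equiv.Perm (Fin n))
    exact_mod_cast this
  have hRpos : (0:ℝ) ≤ 2 * Real.exp (-2 * lam ^ 2 / (m * (b - a) ^ 2)) := by positivity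
  -- trivial case helper: if the filter condition is always false
  have triv : ∀ (hfalse : ∀ σ : Equiv.Perm (Fin n),
      ¬ lam ≤ |(∑ i : Fin m, x (σ (Fin.castLE hm i))) - (m : ℝ) * (∑ i, x i) / n|),
      ((Finset.univ.filter (fun σ : Equiv.Perm (Fin n) =>
        lam ≤ |(∑ i : Fin m, x (σ (Fin.castLE hm i))) - (m : ℝ) * (∑ i, x i) / n|)).card : ℝ)
      / (Fintype.card (Equiv.Perm (Fin n)) : ℝ) ≤
      2 * Real.exp (-2 * lam ^ 2 / (m * (b - a) ^ 2)) := by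
    intro hfalse
    rw [Finset.filter_false_of_mem fun σ _ => hfalse σ]
    simpa using hRpos
  rcases Nat.eq_zero_or_pos m with rfl | hm1
  · apply triv
    intro σ
    simp
    linarith
  have hab0 : a ≤ b := le_trans (hx ⟨0, hn⟩).1 (hx ⟨0, hn⟩).2
  rcases eq_or_lt_of_le hab0 with rfl | hab
  · -- degenerate a = b: all x i = a
    apply triv
    intro σ
    have hxa : ∀ i, x i = a := fun i => le_antisymm (hx i).2 (hx i).1
    have h1 : (∑ i : Fin m, x (σ (Fin.castLE hm i))) = m * a := by
      simp [hxa, mul_comm]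
    have h2 : (∑ i : Fin n, x i) = n * a := by simp [hxa, mul_comm]
    rw [h1, h2]
    have : (m:ℝ) * ((n:ℝ) * a) / n = m * a := by field_simp
    rw [this]
    simp
    linarith
  -- main case
  set y : Equiv.Perm (Fin n) → ℝ :=
    fun σ => (∑ i : Fin m, x (σ (Fin.castLE hm i))) - (m : ℝ) * (∑ i, x i) / n with hy
  have hsplit : Finset.univ.filter (fun σ : Equiv.Perm (Fin n) => lam ≤ |y σ|) =
      (Finset.univ.filter (fun σ : Equiv.Perm (Fin n) => lam ≤ y σ)) ∪
      (Finset.univ.filter (fun σ : Equiv.Perm (Fin n) => lam ≤ -(y σ))) := by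
    rw [← Finset.filter_or]
    apply Finset.filter_congr
    intro σ _
    exact le_abs
  have hcard : (Finset.univ.filter (fun σ : Equiv.Perm (Fin n) => lam ≤ |y σ|)).card ≤
      (Finset.univ.filter (fun σ : Equiv.Perm (Fin n) => lam ≤ y σ)).card +
      (Finset.univ.filter (fun σ : Equiv.Perm (Fin n) => lam ≤ -(y σ))).card := by
    rw [hsplit]; exact Finset.card_union_le _ _
  -- first tail
  have h1 := oneSided n m hm hn a b lam hlam hab hm1 x hx
  -- second tail via x' = -x
  have h2 : ((Finset.univ.filter (fun σ : Equiv.Perm (Fin n) => lam ≤ -(y σ))).card : ℝ)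
      ≤ (n.factorial : ℝ) * Real.exp (-2 * lam ^ 2 / (m * (b - a) ^ 2)) := by
    have hx' : ∀ i, -b ≤ (fun j => -x j) i ∧ (fun j => -x j) i ≤ -a := by
      intro i; constructor <;> simp [(hx i).1, (hx i).2]
    have := oneSided n m hm hn (-b) (-a) lam hlam (by linarith) hm1 (fun j => -x j) hx'
    have hfeq : (Finset.univ.filter (fun σ : Equiv.Perm (Fin n) =>
        lam ≤ (∑ i : Fin m, (fun j => -x j) (σ (Fin.castLE hm i))) -
          (m : ℝ) * (∑ i, (fun j => -x j) i) / n)) =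
        (Finset.univ.filter (fun σ : Equiv.Perm (Fin n) => lam ≤ -(y σ))) := by
      apply Finset.filter_congr
      intro σ _
      have e : (∑ i : Fin m, (fun j => -x j) (σ (Fin.castLE hm i))) -
          (m : ℝ) * (∑ i, (fun j => -x j) i) / n = -(y σ) := by
        simp only [hy, Finset.sum_neg_distrib]
        ring
      rw [e]
    rw [hfeq] at this
    have heq2 : (-a - -b) ^ 2 = (b - a) ^ 2 := by ring
    rwa [heq2] at this
  -- combine
  rw [div_le_iff₀ hN]
  have hNfac : (Fintype.card (Equiv.Perm (Fin n)) : ℝ) = (n.factorial : ℝ) := by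
    rw [Fintype.card_perm, Fintype.card_fin]
  calc ((Finset.univ.filter (fun σ : Equiv.Perm (Fin n) => lam ≤ |y σ|)).card : ℝ)
      ≤ ((Finset.univ.filter (fun σ : Equiv.Perm (Fin n) => lam ≤ y σ)).card : ℝ) +
        ((Finset.univ.filter (fun σ : Equiv.Perm (Fin n) => lam ≤ -(y σ))).card : ℝ) := by
        exact_mod_cast hcard
    _ ≤ (n.factorial : ℝ) * Real.exp (-2 * lam ^ 2 / (m * (b - a) ^ 2)) +
        (n.factorial : ℝ) * Real.exp (-2 * lam ^ 2 / (m * (b - a) ^ 2)) := add_le_add h1 h2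
    _ = 2 * Real.exp (-2 * lam ^ 2 / (m * (b - a) ^ 2)) * (n.factorial : ℝ) := by ring
    _ = 2 * Real.exp (-2 * lam ^ 2 / (m * (b - a) ^ 2)) *
          (Fintype.card (Equiv.Perm (Fin n)) : ℝ) := by rw [hNfac]
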